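/- Let a, b, c, d, e, f ∈ ℝ, M = [[1-a-b, a, b], [c, 1-c-d, d], [e, f, 1-e-f]], s = a+b+c+d+e+f, p = ad+ae+af+bc+bd+bf+ce+cf+de, and suppose Δ = s^2 - 4p > 0. Let x_1 = (2-s-√Δ)/2 and x_2 = (2-s+√Δ)/2, and suppose x_1 ≠ 1 and x_2 ≠ 1. For i = 1, 2 and n ∈ ℕ, set X_i(n) = (x_i^n - 1)/(x_i - 1), and define a_n = (X_2(n) - X_1(n))/√Δ, b_n = ((x_2 + 1)X_1(n) - (x_1 + 1)X_2(n))/√Δ, and c_n = 1 + (x_1 X_2(n) - x_2 X_1(n))/√Δ. Then for every n ≥ 1, M^n = a_n·M^2 + b_n·M + c_n·I_3. -/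

import Mathlib

open Matrix

theorem stmt_11 (a b c d e f s p x1 x2 : ℝ) (X1 X2 an bn cn : ℕ → ℝ)
    (M : Matrix (Fin 3) (Fin 3) ℝ)
    (hM : M = !![1 - a - b, a, b; c, 1 - c - d, d; e, f, 1 - e - f])
    (hs : s = a + b + c + d + e + f)
    (hp : p = a*d + a*e + a*f + b*c + b*d + b*f + c*e + c*f + d*e)
    (hΔ : s ^ 2 - 4 * p > 0)
    (hx1 : x1 = (2 - s - Real.sqrt (s ^ 2 - 4 * p)) / 2)
    (hx2 : x2 = (2 - s + Real.sqrt (s ^ 2 - 4 * p)) / 2)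
    (hx1ne : x1 ≠ 1) (hx2ne : x2 ≠ 1)
    (hX1 : ∀ n : ℕ, X1 n = (x1 ^ n - 1) / (x1 - 1))
    (hX2 : ∀ n : ℕ, X2 n = (x2 ^ n - 1) / (x2 - 1))
    (han : ∀ n : ℕ, an n = (X2 n - X1 n) / Real.sqrt (s ^ 2 - 4 * p))
    (hbn : ∀ n : ℕ, bn n =
      ((x2 + 1) * X1 n - (x1 + 1) * X2 n) / Real.sqrt (s ^ 2 - 4 * p))
    (hcn : ∀ n : ℕ, cn n = 1 + (x1 * X2 n - x2 * X1 n) / Real.sqrt (s ^ 2 - 4 * p)) :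
    ∀ n : ℕ, 1 ≤ n →
      M ^ n = an n • M ^ 2 + bn n • M + cn n • (1 : Matrix (Fin 3) (Fin 3) ℝ) := by
  set D := Real.sqrt (s ^ 2 - 4 * p) with hDdef
  have hDpos : 0 < D := Real.sqrt_pos.2 hΔ
  have hD2 : D ^ 2 = s ^ 2 - 4 * p := Real.sq_sqrt hΔ.le
  have hD : x2 - x1 = D := by rw [hx1, hx2]; ring
  have hsum : x1 + x2 = 2 - s := by rw [hx1, hx2]; ring
  have hmul : x1 * x2 = 1 - s + p := by
    have : x1 * x2 = ((2 - s) ^ 2 - D ^ 2) / 4 := by rw [hx1, hx2]; ring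
    rw [this, hD2]; ring
  have hx1' : x1 - 1 ≠ 0 := sub_ne_zero.2 hx1ne
  have hx2' : x2 - 1 ≠ 0 := sub_ne_zero.2 hx2ne
  have hx12 : x2 - x1 ≠ 0 := by rw [hD]; exact hDpos.ne'
  -- cubic relation
  have hcube : M ^ 3 = (3 - s) • M ^ 2 - (3 - 2*s + p) • M + (1 - s + p) • (1 : Matrix (Fin 3) (Fin 3) ℝ) := by
    have h3 : M ^ 3 = M * M * M := by rw [pow_succ, pow_succ, pow_one]
    have h2 : M ^ 2 = M * M := by rw [pow_succ, pow_one]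
    rw [h3, h2, hM, hs, hp, Matrix.mul_fin_three, Matrix.mul_fin_three,
      Matrix.one_fin_three]
    ext i j
    fin_cases i <;> fin_cases j <;>
      simp [Matrix.smul_apply, Matrix.vecHead, Matrix.vecTail] <;> ring
  -- coefficient recurrences
  have hA : ∀ n : ℕ, an (n+1) = (1 + x1 + x2) * an n + bn n := by
    intro n
    rw [han, han, hbn, hX1, hX2, hX1, hX2, ← hD, pow_succ, pow_succ]
    field_simp
    ring
  have hB : ∀ n : ℕ, bn (n+1) = cn n - (x1 + x2 + x1*x2) * an n := by
    intro n
    rw [hbn, han, hcn, hX1, hX2, hX1, hX2, ← hD, pow_succ, pow_succ]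
    field_simp
    ring
  have hC : ∀ n : ℕ, cn (n+1) = x1 * x2 * an n := by
    intro n
    rw [hcn, han, hX1, hX2, hX1, hX2, ← hD, pow_succ, pow_succ]
    field_simp
    ring
  intro n hn
  induction n with
  | zero => omega
  | succ n ih =>
    rcases Nat.lt_or_ge n 1 with h1 | h1
    · -- n = 0, base case n+1 = 1
      interval_cases n
      have ha1 : an 1 = 0 := by
        rw [han, hX1, hX2]; simp [hx1', hx2']
      have hb1 : bn 1 = 1 := by
        rw [hbn, hX1, hX2, ← hD]
        field_simp
        ring
      have hc1 : cn 1 = 0 := by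
        rw [hcn, hX1, hX2, ← hD]
        field_simp
        ring
      simp [ha1, hb1, hc1]
    · have ih' := ih h1
      have hstep : M ^ (n+1) = M * M ^ n := (pow_succ' M n)
      rw [hstep, ih']
      rw [mul_add, mul_add, mul_smul_comm, mul_smul_comm, mul_smul_comm]
      have e1 : M * M ^ 2 = M ^ 3 := (pow_succ' M 2).symm
      have e2 : M * M = M ^ 2 := (sq M).symm
      rw [e1, e2, mul_one, hcube, hA, hB, hC]
      have h31 : (3 : ℝ) - s = 1 + x1 + x2 := by linarith [hsum]
      have h32 : (3 : ℝ) - 2*s + p = x1 + x2 + x1*x2 := by linarith [hsum, hmul]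
      have h33 : (1 : ℝ) - s + p = x1 * x2 := hmul.symm
      rw [h31, h32, h33]
      module
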